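/- For every integer n ≥ 3, there exists a unique t₀ > 0 satisfying sinh((n−1)t₀) · ∫₀^{t₀} cosh((n−1)s)^((2−n)/(n−1)) ds = cosh((n−1)t₀)^(1/(n−1)). -/

import Mathlib

open Real intervalIntegral

/-- For every integer `n ≥ 3`, there is a unique `t₀ > 0` with
`sinh((n−1)t₀) · ∫₀^{t₀} cosh((n−1)s)^((2−n)/(n−1)) ds = cosh((n−1)t₀)^(1/(n−1))`,
i.e. a unique positive parameter at which the position vector of the `n`-catenoid
profile curve is parallel to its tangent vector. -/
theorem catenoid_unique_positive_radial_tangency (n : ℕ) (hn : 3 ≤ n) :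
    ∃! t₀ : ℝ, 0 < t₀ ∧
      Real.sinh (((n : ℝ) - 1) * t₀) *
        ∫ s in (0 : ℝ)..t₀,
          (Real.cosh (((n : ℝ) - 1) * s)) ^ (((2 : ℝ) - n) / ((n : ℝ) - 1)) =
      (Real.cosh (((n : ℝ) - 1) * t₀)) ^ ((1 : ℝ) / ((n : ℝ) - 1)) := by
  set a : ℝ := (n : ℝ) - 1 with ha_def
  have hn' : (3 : ℝ) ≤ (n : ℝ) := by exact_mod_cast hn
  have ha2 : (2 : ℝ) ≤ a := by simp [ha_def]; linarith
  have ha0 : 0 < a := by linarith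
  set p : ℝ := ((2 : ℝ) - n) / ((n : ℝ) - 1) with hp_def
  have hp : p = 1 / a - 1 := by
    have hne : (n:ℝ) - 1 ≠ 0 := by linarith
    rw [hp_def, ha_def, div_sub_one hne]; congr 1; ring
  have hpneg : p ≤ 0 := by
    rw [hp]
    have : 1 / a ≤ 1 := by
      rw [div_le_one ha0]; linarith
    linarith
  -- integrand
  set g : ℝ → ℝ := fun s => Real.cosh (a * s) ^ p with hg_def
  have hcosh_pos : ∀ s : ℝ, 0 < Real.cosh (a * s) := fun s => Real.cosh_pos (a * s)
  have hg_cont : Continuous g := by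
    apply Continuous.rpow_const (by continuity)
    intro s; exact Or.inl (hcosh_pos s).ne'
  have hg_pos : ∀ s : ℝ, 0 < g s := fun s => Real.rpow_pos_of_pos (hcosh_pos s) p
  set ψ : ℝ → ℝ := fun t => ∫ s in (0 : ℝ)..t, g s with hψ_def
  set f : ℝ → ℝ := fun t => Real.sinh (a * t) * ψ t - Real.cosh (a * t) ^ ((1:ℝ) / a)
    with hf_def
  -- ψ derivative
  have hψ_deriv : ∀ t : ℝ, HasDerivAt ψ (g t) t := fun t =>
    (hg_cont.integral_hasStrictDerivAt 0 t).hasDerivAt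
  have hψ_pos : ∀ t : ℝ, 0 < t → 0 < ψ t := by
    intro t ht
    exact intervalIntegral_pos_of_pos (hg_cont.intervalIntegrable 0 t)
      (fun s => hg_pos s) ht
  -- derivative of f
  have hf_deriv : ∀ t : ℝ, HasDerivAt f (a * Real.cosh (a * t) * ψ t) t := by
    intro t
    have hat : HasDerivAt (fun y : ℝ => a * y) a t := by
      simpa using (hasDerivAt_id t).const_mul a
    have h1 : HasDerivAt (fun t => Real.sinh (a * t)) (a * Real.cosh (a * t)) t := by
      simpa [mul_comm] using hat.sinh
    have h2 : HasDerivAt (fun t => Real.cosh (a * t)) (a * Real.sinh (a * t)) t := by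
      simpa [mul_comm] using hat.cosh
    have h3 : HasDerivAt (fun t => Real.cosh (a * t) ^ ((1:ℝ) / a))
        (Real.sinh (a * t) * Real.cosh (a * t) ^ p) t := by
      have h := h2.rpow_const (p := (1:ℝ) / a) (Or.inl (hcosh_pos t).ne')
      convert h using 1
      rw [hp]
      field_simp
    have h4 := (h1.mul (hψ_deriv t)).sub h3
    refine HasDerivAt.congr_deriv (f := f) h4 ?_
    simp only [hg_def]
    ring
  have hf_diff : Differentiable ℝ f := fun t => (hf_deriv t).differentiableAt
  have hf_cont : Continuous f := hf_diff.continuous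
  -- strict monotonicity on [0, ∞)
  have hmono : StrictMonoOn f (Set.Ici (0 : ℝ)) := by
    apply strictMonoOn_of_deriv_pos (convex_Ici 0) hf_cont.continuousOn
    intro t ht
    rw [interior_Ici] at ht
    rw [(hf_deriv t).deriv]
    have := hψ_pos t ht
    positivity
  -- value at 0
  have hf0 : f 0 = -1 := by
    simp [hf_def, hψ_def, Real.sinh_zero, Real.cosh_zero, Real.one_rpow,
      intervalIntegral.integral_same]
  -- value at 2
  have hf2 : 0 < f 2 := by
    have hcosh2 := hcosh_pos 2
    have hψ2 : 2 * g 2 ≤ ψ 2 := by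
      have : ∫ s in (0:ℝ)..2, g 2 ≤ ∫ s in (0:ℝ)..2, g s := by
        apply intervalIntegral.integral_mono_on (by norm_num)
          (intervalIntegrable_const) (hg_cont.intervalIntegrable 0 2)
        intro s hs
        rcases hs with ⟨hs0, hs2⟩
        apply Real.rpow_le_rpow_of_nonpos (hcosh_pos s) _ hpneg
        exact Real.cosh_le_cosh.mpr (by
          rw [abs_of_nonneg (by positivity), abs_of_nonneg (by nlinarith)]
          nlinarith)
      simpa [mul_comm] using this
    have hsinh_big : Real.cosh (a * 2) < 2 * Real.sinh (a * 2) := by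
      have hx4 : (4 : ℝ) ≤ a * 2 := by linarith
      have h1 : Real.cosh (a * 2) - Real.sinh (a * 2) = Real.exp (-(a * 2)) := by
        rw [Real.cosh_eq, Real.sinh_eq]; ring
      have h2 : Real.exp (-(a * 2)) ≤ 1 := Real.exp_le_one_iff.mpr (by linarith)
      have h3 : (4 : ℝ) < Real.sinh (a * 2) := by
        have := Real.self_lt_sinh_iff.mpr (show (0:ℝ) < a * 2 by linarith)
        linarith
      nlinarith
    have key : Real.cosh (a * 2) ^ ((1:ℝ)/a) < Real.sinh (a * 2) * (2 * g 2) := by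
      have hgp : g 2 = Real.cosh (a * 2) ^ ((1:ℝ)/a) / Real.cosh (a * 2) := by
        rw [hg_def]
        simp only
        rw [hp, Real.rpow_sub hcosh2, Real.rpow_one]
      rw [hgp]
      have hC : 0 < Real.cosh (a * 2) ^ ((1:ℝ)/a) := Real.rpow_pos_of_pos hcosh2 _
      have hgt1 : 1 < 2 * Real.sinh (a * 2) / Real.cosh (a * 2) :=
        (one_lt_div hcosh2).mpr hsinh_big
      calc Real.cosh (a * 2) ^ ((1:ℝ)/a)
          = Real.cosh (a * 2) ^ ((1:ℝ)/a) * 1 := (mul_one _).symm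
        _ < Real.cosh (a * 2) ^ ((1:ℝ)/a) * (2 * Real.sinh (a * 2) / Real.cosh (a * 2)) :=
            mul_lt_mul_of_pos_left hgt1 hC
        _ = Real.sinh (a * 2) * (2 * (Real.cosh (a * 2) ^ ((1:ℝ)/a) / Real.cosh (a * 2))) := by
            ring
    have hsinh_pos : 0 < Real.sinh (a * 2) := Real.sinh_pos_iff.mpr (by positivity)
    have : Real.sinh (a * 2) * (2 * g 2) ≤ Real.sinh (a * 2) * ψ 2 :=
      mul_le_mul_of_nonneg_left hψ2 hsinh_pos.le
    simp only [hf_def]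
    linarith
  -- existence via IVT
  obtain ⟨t₀, ht₀mem, ht₀⟩ := intermediate_value_Ioo (by norm_num : (0:ℝ) ≤ 2)
    hf_cont.continuousOn (by rw [hf0]; exact ⟨by norm_num, hf2⟩ : (0:ℝ) ∈ Set.Ioo (f 0) (f 2))
  refine ⟨t₀, ⟨ht₀mem.1, ?_⟩, ?_⟩
  · have h0 : f t₀ = 0 := ht₀
    show Real.sinh (a * t₀) * ψ t₀ = Real.cosh (a * t₀) ^ ((1:ℝ)/a)
    have : Real.sinh (a * t₀) * ψ t₀ - Real.cosh (a * t₀) ^ ((1:ℝ)/a) = 0 := h0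
    linarith
  · rintro t ⟨htpos, hteq⟩
    have hteq' : Real.sinh (a * t) * ψ t = Real.cosh (a * t) ^ ((1:ℝ)/a) := hteq
    have hft : f t = 0 := by
      show Real.sinh (a * t) * ψ t - Real.cosh (a * t) ^ ((1:ℝ)/a) = 0
      rw [hteq']; ring
    have hft₀ : f t₀ = 0 := ht₀
    exact hmono.injOn (Set.mem_Ici.mpr htpos.le) (Set.mem_Ici.mpr ht₀mem.1.le)
      (by rw [hft, hft₀])
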